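/- Let π, π' be probability vectors in ℝ^N, let N ≥ 2, let the means μ_1, …, μ_N be pairwise distinct with common standard deviation σ > 0, let F_n be the corresponding Gaussian CDFs, and let M be the Gaussian kernel matrix with zero diagonal (M_{ji} = φ_i(μ_j) for i ≠ j, M_{jj} = 0). Define L⁻_i = min(π_i − π'_i, 0). Then the following are equivalent: (a) ∫_ℝ |Σ_{n=1}^N (π_n − π'_n) F_n(x)| dx = 0; (b) ‖NGMG(L⁻)‖₁ = ‖−M L⁻‖₁ = 0. Moreover each is equivalent to π = π'. -/

import Mathlib

open MeasureTheory Matrix ENNReal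

set_option maxHeartbeats 1000000

/-- Gaussian density with mean `μ` and standard deviation `σ`. -/
noncomputable def gaussPDF (μ σ x : ℝ) : ℝ :=
  (1 / (σ * Real.sqrt (2 * Real.pi))) * Real.exp (-((x - μ) ^ 2) / (2 * σ ^ 2))

/-- Gaussian CDF with mean `μ` and standard deviation `σ`. -/
noncomputable def gaussCDF (μ σ x : ℝ) : ℝ :=
  ∫ s in Set.Iic x, gaussPDF μ σ s

/-- ℓ¹ norm on `Fin N → ℝ`. -/
noncomputable def l1norm {N : ℕ} (v : Fin N → ℝ) : ℝ :=
  ∑ n, |v n|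

lemma gaussPDF_pos {σ : ℝ} (hσ : 0 < σ) (μ x : ℝ) : 0 < gaussPDF μ σ x := by
  unfold gaussPDF
  have := Real.sqrt_pos.2 (by positivity : (0:ℝ) < 2 * Real.pi)
  positivity

lemma continuous_gaussPDF (μ σ : ℝ) : Continuous (gaussPDF μ σ) := by
  unfold gaussPDF; fun_prop

lemma integrable_gaussPDF {σ : ℝ} (hσ : 0 < σ) (μ : ℝ) : Integrable (gaussPDF μ σ) := by
  have hb : (0:ℝ) < 1/(2*σ^2) := by positivity
  have h : Integrable (fun x : ℝ => Real.exp (-(1/(2*σ^2)) * x ^ 2)) :=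
    integrable_exp_neg_mul_sq hb
  have h2 : Integrable (fun x : ℝ =>
      (1 / (σ * Real.sqrt (2 * Real.pi))) * Real.exp (-(1/(2*σ^2)) * (x - μ) ^ 2)) :=
    (h.comp_sub_right μ).const_mul _
  refine h2.congr (Filter.Eventually.of_forall fun x => ?_)
  unfold gaussPDF
  have : -(1/(2*σ^2)) * (x - μ)^2 = -((x - μ)^2) / (2*σ^2) := by ring
  simp only [this]

lemma gaussCDF_sub {σ : ℝ} (hσ : 0 < σ) (μ : ℝ) {u v : ℝ} (huv : u ≤ v) :
    gaussCDF μ σ v - gaussCDF μ σ u = ∫ s in Set.Ioc u v, gaussPDF μ σ s := by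
  unfold gaussCDF
  rw [← Set.Iic_union_Ioc_eq_Iic huv,
    setIntegral_union (Set.Iic_disjoint_Ioc le_rfl) measurableSet_Ioc
      ((integrable_gaussPDF hσ μ).integrableOn) ((integrable_gaussPDF hσ μ).integrableOn)]
  ring

lemma hasDerivAt_gaussCDF {σ : ℝ} (hσ : 0 < σ) (μ x : ℝ) :
    HasDerivAt (gaussCDF μ σ) (gaussPDF μ σ x) x := by
  have key : ∀ y : ℝ, gaussCDF μ σ y = gaussCDF μ σ 0 + ∫ s in (0:ℝ)..y, gaussPDF μ σ s := by
    intro y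
    have := intervalIntegral.integral_Iic_sub_Iic
      ((integrable_gaussPDF hσ μ).integrableOn (s := Set.Iic 0))
      ((integrable_gaussPDF hσ μ).integrableOn (s := Set.Iic y))
    unfold gaussCDF
    linarith [this]
  have hd : HasDerivAt (fun y => gaussCDF μ σ 0 + ∫ s in (0:ℝ)..y, gaussPDF μ σ s)
      (gaussPDF μ σ x) x := by
    refine HasDerivAt.const_add _ ?_
    exact intervalIntegral.integral_hasDerivAt_right
      ((integrable_gaussPDF hσ μ).intervalIntegrable)
      (((continuous_gaussPDF μ σ).stronglyMeasurable).stronglyMeasurableAtFilter)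
      (continuous_gaussPDF μ σ).continuousAt
  exact hd.congr_of_eventuallyEq (Filter.Eventually.of_forall key)

lemma continuous_gaussCDF {σ : ℝ} (hσ : 0 < σ) (μ : ℝ) : Continuous (gaussCDF μ σ) :=
  continuous_iff_continuousAt.2 fun x => (hasDerivAt_gaussCDF hσ μ x).continuousAt

lemma gaussCDF_mono {σ : ℝ} (hσ : 0 < σ) (μ : ℝ) {u v : ℝ} (huv : u ≤ v) :
    gaussCDF μ σ u ≤ gaussCDF μ σ v := by
  have h := gaussCDF_sub hσ μ huv
  have h2 : 0 ≤ ∫ s in Set.Ioc u v, gaussPDF μ σ s :=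
    setIntegral_nonneg measurableSet_Ioc fun s _ => (gaussPDF_pos hσ μ s).le
  linarith

lemma gaussPDF_shift (μ σ s : ℝ) : gaussPDF μ σ s = gaussPDF 0 σ (s - μ) := by
  unfold gaussPDF; rw [sub_zero]

lemma gaussCDF_shift (μ σ x : ℝ) : gaussCDF μ σ x = gaussCDF 0 σ (x - μ) := by
  unfold gaussCDF
  have h1 : ∀ s : ℝ, (Set.Iic x).indicator (gaussPDF μ σ) s
      = (Set.Iic (x - μ)).indicator (gaussPDF 0 σ) (s - μ) := by
    intro s
    by_cases hs : s ≤ x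
    · rw [Set.indicator_of_mem (Set.mem_Iic.2 hs),
        Set.indicator_of_mem (Set.mem_Iic.2 (by linarith)), gaussPDF_shift]
    · rw [Set.indicator_of_notMem (fun h => hs (Set.mem_Iic.1 h)),
        Set.indicator_of_notMem (fun h => hs (by simpa using Set.mem_Iic.1 h |> fun h2 => by linarith))]
  rw [← integral_indicator measurableSet_Iic, ← integral_indicator measurableSet_Iic]
  calc ∫ s, (Set.Iic x).indicator (gaussPDF μ σ) s
      = ∫ s, (Set.Iic (x - μ)).indicator (gaussPDF 0 σ) (s - μ) := by
        exact integral_congr_ae (Filter.Eventually.of_forall h1)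
    _ = ∫ s, (Set.Iic (x - μ)).indicator (gaussPDF 0 σ) s :=
        integral_sub_right_eq_self _ μ

lemma integrable_gaussCDF_sub_of_le {σ : ℝ} (hσ : 0 < σ) {a b : ℝ} (hab : a ≤ b) :
    Integrable (fun x => gaussCDF a σ x - gaussCDF b σ x) := by
  set g := fun x => gaussCDF a σ x - gaussCDF b σ x with hg
  have hgnn : ∀ x, 0 ≤ g x := by
    intro x
    have : gaussCDF b σ x ≤ gaussCDF a σ x := by
      rw [gaussCDF_shift a σ x, gaussCDF_shift b σ x]
      exact gaussCDF_mono hσ 0 (by linarith)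
    simp [hg]; linarith
  have hrep : ∀ x, g x = ∫ s in Set.Ioc (x - b) (x - a), gaussPDF 0 σ s := by
    intro x
    rw [hg]
    simp only
    rw [gaussCDF_shift a σ x, gaussCDF_shift b σ x]
    exact gaussCDF_sub hσ 0 (by linarith)
  have hcont : Continuous g := ((continuous_gaussCDF hσ a).sub (continuous_gaussCDF hσ b))
  refine ⟨hcont.aestronglyMeasurable, ?_⟩
  -- finite integral via Tonelli
  set Ψ : ℝ → ℝ≥0∞ := fun s => ENNReal.ofReal (gaussPDF 0 σ s) with hΨ
  have hΨm : Measurable Ψ := (continuous_gaussPDF 0 σ).measurable.ennreal_ofReal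
  set K : ℝ × ℝ → ℝ≥0∞ := fun p =>
    Set.indicator {q : ℝ × ℝ | q.1 - b < q.2 ∧ q.2 ≤ q.1 - a} (fun q => Ψ q.2) p with hK
  have hSm : MeasurableSet {q : ℝ × ℝ | q.1 - b < q.2 ∧ q.2 ≤ q.1 - a} := by
    apply MeasurableSet.inter
    · exact measurableSet_lt (measurable_fst.sub measurable_const) measurable_snd
    · exact measurableSet_le measurable_snd (measurable_fst.sub measurable_const)
  have hKm : Measurable K := (hΨm.comp measurable_snd).indicator hSm
  have hofg : ∀ x, (‖g x‖₊ : ℝ≥0∞) = ∫⁻ s, K (x, s) := by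
    intro x
    rw [← enorm_eq_nnnorm, Real.enorm_eq_ofReal (hgnn x), hrep x,
      ofReal_integral_eq_lintegral_ofReal ((integrable_gaussPDF hσ 0).integrableOn)
        (Filter.Eventually.of_forall fun s => (gaussPDF_pos hσ 0 s).le)]
    rw [← lintegral_indicator measurableSet_Ioc]
    congr 1
  have hswap : ∫⁻ x, ∫⁻ s, K (x, s) = ∫⁻ s, ∫⁻ x, K (x, s) := by
    exact lintegral_lintegral_swap hKm.aemeasurable
  have hinner : ∀ s : ℝ, ∫⁻ x, K (x, s) = Ψ s * ENNReal.ofReal (b - a) := by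
    intro s
    have : ∀ x : ℝ, K (x, s) = (Set.Ico (s + a) (s + b)).indicator (fun _ => Ψ s) x := by
      intro x
      rw [hK]
      simp only [Set.indicator_apply, Set.mem_Ico, Set.mem_setOf_eq]
      by_cases h1 : s + a ≤ x ∧ x < s + b
      · rw [if_pos ⟨by linarith [h1.2], by linarith [h1.1]⟩, if_pos h1]
      · rw [if_neg, if_neg h1]
        intro hc
        exact h1 ⟨by linarith [hc.2], by linarith [hc.1]⟩
    simp_rw [this]
    rw [lintegral_indicator measurableSet_Ico, setLIntegral_const, Real.volume_Ico]
    congr 1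
    ring_nf
  have hfin : ∫⁻ s, Ψ s * ENNReal.ofReal (b - a) < ⊤ := by
    rw [lintegral_mul_const _ hΨm]
    exact ENNReal.mul_lt_top (integrable_gaussPDF hσ 0).lintegral_lt_top ENNReal.ofReal_lt_top
  unfold HasFiniteIntegral
  calc ∫⁻ x, (‖g x‖₊ : ℝ≥0∞) = ∫⁻ x, ∫⁻ s, K (x, s) := lintegral_congr hofg
    _ = ∫⁻ s, ∫⁻ x, K (x, s) := hswap
    _ = ∫⁻ s, Ψ s * ENNReal.ofReal (b - a) := lintegral_congr hinner
    _ < ⊤ := hfin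

lemma integrable_gaussCDF_sub {σ : ℝ} (hσ : 0 < σ) (a b : ℝ) :
    Integrable (fun x => gaussCDF a σ x - gaussCDF b σ x) := by
  rcases le_total a b with hab | hab
  · exact integrable_gaussCDF_sub_of_le hσ hab
  · have := (integrable_gaussCDF_sub_of_le hσ hab).neg
    refine this.congr (Filter.Eventually.of_forall fun x => ?_)
    simp only [Pi.neg_apply]
    ring

lemma vandermonde_step {N : ℕ} {σ : ℝ} (hσ : 0 < σ) {μ : Fin N → ℝ}
    (hμ : Function.Injective μ) {c : Fin N → ℝ}
    (hzero : ∀ x : ℝ, ∑ n, c n * gaussPDF (μ n) σ x = 0) : c = 0 := by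
  have hσ' : σ ≠ 0 := ne_of_gt hσ
  have hS : (0:ℝ) < σ * Real.sqrt (2 * Real.pi) := by
    have := Real.sqrt_pos.2 (by positivity : (0:ℝ) < 2 * Real.pi)
    positivity
  set r : Fin N → ℝ := fun n => Real.exp (μ n / σ ^ 2) with hr
  set d : Fin N → ℝ := fun n => c n * Real.exp (-(μ n) ^ 2 / (2 * σ ^ 2)) with hd
  have hrinj : Function.Injective r := by
    intro m n h
    apply hμ
    have h2 : μ m / σ ^ 2 = μ n / σ ^ 2 := Real.exp_injective h
    field_simp at h2
    exact h2
  have key : ∀ k : Fin N, ∑ n, r n ^ (k : ℕ) * d n = 0 := by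
    intro k
    set y : ℝ := ((k : ℕ) : ℝ) with hy
    have h0 := hzero y
    have hterm : ∀ n, r n ^ (k : ℕ) * d n
        = (σ * Real.sqrt (2 * Real.pi)) * Real.exp (y ^ 2 / (2 * σ ^ 2))
          * (c n * gaussPDF (μ n) σ y) := by
      intro n
      simp only [hr, hd]
      rw [← Real.exp_nat_mul]
      unfold gaussPDF
      have hexp : Real.exp ((k : ℕ) * (μ n / σ ^ 2)) * Real.exp (-(μ n) ^ 2 / (2 * σ ^ 2))
          = Real.exp (y ^ 2 / (2 * σ ^ 2)) * Real.exp (-((y - μ n) ^ 2) / (2 * σ ^ 2)) := by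
        rw [← Real.exp_add, ← Real.exp_add]
        congr 1
        rw [hy]
        field_simp
        ring
      set S := σ * Real.sqrt (2 * Real.pi) with hSdef
      have hS0 : S ≠ 0 := ne_of_gt hS
      have e : S * (1 / S) = 1 := mul_one_div_cancel hS0
      linear_combination c n * hexp - c n * Real.exp (y ^ 2 / (2 * σ ^ 2)) * Real.exp (-((y - μ n) ^ 2) / (2 * σ ^ 2)) * e
    rw [Finset.sum_congr rfl fun n _ => hterm n, ← Finset.mul_sum, h0, mul_zero]
  have hA : ((Matrix.vandermonde r)ᵀ) *ᵥ d = 0 := by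
    funext k
    have : ((Matrix.vandermonde r)ᵀ *ᵥ d) k = ∑ n, r n ^ (k : ℕ) * d n := by
      simp [Matrix.mulVec, dotProduct, Matrix.transpose_apply, Matrix.vandermonde_apply]
    rw [this, key k]
    rfl
  have hdet : ((Matrix.vandermonde r)ᵀ).det ≠ 0 := by
    rw [Matrix.det_transpose]
    exact Matrix.det_vandermonde_ne_zero_iff.2 hrinj
  have hd0 : d = 0 := Matrix.eq_zero_of_mulVec_eq_zero hdet hA
  funext n
  have := congrFun hd0 n
  simp only [hd, Pi.zero_apply, mul_eq_zero] at this
  rcases this with h | h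
  · exact h
  · exact absurd h (Real.exp_ne_zero _)

lemma integral_zero_imp {N : ℕ} (i0 : Fin N) {σ : ℝ} (hσ : 0 < σ) {μ : Fin N → ℝ}
    (hμ : Function.Injective μ) {c : Fin N → ℝ} (hcs : ∑ n, c n = 0)
    (h0 : ∫ x : ℝ, |∑ n, c n * gaussCDF (μ n) σ x| = 0) : c = 0 := by
  set f : ℝ → ℝ := fun x => ∑ n, c n * gaussCDF (μ n) σ x with hf
  have hfint : Integrable f := by
    have heq : f = fun x => ∑ n, c n * (gaussCDF (μ n) σ x - gaussCDF (μ i0) σ x) := by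
      funext x
      simp only [hf, mul_sub]
      rw [Finset.sum_sub_distrib, ← Finset.sum_mul, hcs, zero_mul, sub_zero]
    rw [heq]
    exact integrable_finset_sum _ fun n _ => ((integrable_gaussCDF_sub hσ _ _).const_mul _)
  have hfcont : Continuous f :=
    continuous_finset_sum _ fun n _ => continuous_const.mul (continuous_gaussCDF hσ _)
  have habs : (fun x => |f x|) =ᵐ[volume] 0 :=
    (integral_eq_zero_iff_of_nonneg_ae (Filter.Eventually.of_forall fun x => abs_nonneg (f x))
      hfint.abs).1 h0
  have hae : f =ᵐ[volume] (fun _ => (0:ℝ)) := by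
    filter_upwards [habs] with x hx
    have : |f x| = 0 := hx
    exact abs_eq_zero.1 this
  have hf0 : f = fun _ => (0:ℝ) :=
    (Continuous.ae_eq_iff_eq volume hfcont continuous_const).1 hae
  have hderiv : ∀ x, ∑ n, c n * gaussPDF (μ n) σ x = 0 := by
    intro x
    have h1 : HasDerivAt f (∑ n, c n * gaussPDF (μ n) σ x) x := by
      apply HasDerivAt.fun_sum
      exact fun n _ => (hasDerivAt_gaussCDF hσ (μ n) x).const_mul (c n)
    have h2 : HasDerivAt f (0:ℝ) x := by
      rw [hf0]
      exact hasDerivAt_const x 0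
    exact h1.unique h2
  exact vandermonde_step hσ hμ hderiv

/-- the vanishing of the 1-Wasserstein distance
`∫_ℝ |∑ (πₙ - π'ₙ) Fₙ(x)| dx` is equivalent to the vanishing of `‖NGMG(L⁻)‖₁ = ‖-M L⁻‖₁`,
and each is equivalent to `π = π'`. -/
theorem stmt_9 {N : ℕ} (hN : 2 ≤ N) (σ : ℝ) (hσ : 0 < σ)
    (μ : Fin N → ℝ) (hμ : Function.Injective μ)
    (π π' : Fin N → ℝ)
    (hπ : ∀ n, 0 ≤ π n) (hπs : ∑ n, π n = 1)
    (hπ' : ∀ n, 0 ≤ π' n) (hπ's : ∑ n, π' n = 1)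
    (M : Matrix (Fin N) (Fin N) ℝ)
    (hM : ∀ j i, M j i = if i = j then 0 else gaussPDF (μ i) σ (μ j))
    (Lm : Fin N → ℝ) (hLm : ∀ i, Lm i = min (π i - π' i) 0) :
    ((∫ x : ℝ, |∑ n, (π n - π' n) * gaussCDF (μ n) σ x| = 0) ↔
      l1norm (-(M *ᵥ Lm)) = 0) ∧
    ((∫ x : ℝ, |∑ n, (π n - π' n) * gaussCDF (μ n) σ x| = 0) ↔ π = π') := by
  have hcs : ∑ n, (π n - π' n) = 0 := by
    rw [Finset.sum_sub_distrib, hπs, hπ's, sub_self]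
  have i0 : Fin N := ⟨0, by omega⟩
  have E1 : (∫ x : ℝ, |∑ n, (π n - π' n) * gaussCDF (μ n) σ x| = 0) ↔ π = π' := by
    constructor
    · intro h0
      have hc := integral_zero_imp i0 hσ hμ hcs h0
      funext n
      have h2 := congrFun hc n
      simp only [Pi.zero_apply, sub_eq_zero] at h2
      exact h2
    · intro h
      subst h
      simp
  have E2 : l1norm (-(M *ᵥ Lm)) = 0 ↔ π = π' := by
    constructor
    · intro h
      have hterm0 : ∀ j, (M *ᵥ Lm) j = 0 := by
        intro j
        have h1 := (Finset.sum_eq_zero_iff_of_nonneg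
          (fun j _ => abs_nonneg ((-(M *ᵥ Lm)) j))).1 h j (Finset.mem_univ j)
        have h2 : |(-(M *ᵥ Lm)) j| = 0 := h1
        simpa [abs_eq_zero, neg_eq_zero] using h2
      have hLm0 : ∀ i, Lm i = 0 := by
        intro i
        have : Nontrivial (Fin N) := Fin.nontrivial_iff_two_le.2 hN
        obtain ⟨j, hj⟩ := exists_ne i
        have hsum : ∑ i', M j i' * Lm i' = 0 := by
          have := hterm0 j
          simpa [Matrix.mulVec, dotProduct] using this
        have hnp : ∀ i' ∈ Finset.univ, M j i' * Lm i' ≤ 0 := by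
          intro i' _
          have h1 : 0 ≤ M j i' := by
            rw [hM]
            split
            · exact le_rfl
            · exact (gaussPDF_pos hσ _ _).le
          have h2 : Lm i' ≤ 0 := by rw [hLm]; exact min_le_right _ _
          exact mul_nonpos_iff.2 (Or.inl ⟨h1, h2⟩)
        have hz := (Finset.sum_eq_zero_iff_of_nonpos hnp).1 hsum i (Finset.mem_univ i)
        have hMpos : 0 < M j i := by
          rw [hM, if_neg hj.symm]
          exact gaussPDF_pos hσ _ _
        exact (mul_eq_zero.1 hz).resolve_left (ne_of_gt hMpos)
      have hge : ∀ i, 0 ≤ π i - π' i := by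
        intro i
        have h3 := hLm0 i
        rw [hLm] at h3
        by_contra hlt
        push_neg at hlt
        rw [min_eq_left (by linarith)] at h3
        linarith
      funext i
      have := (Finset.sum_eq_zero_iff_of_nonneg (fun i _ => hge i)).1 hcs i (Finset.mem_univ i)
      linarith
    · intro h
      have hLm0 : Lm = (0 : Fin N → ℝ) := by
        funext i
        rw [hLm, h]
        simp
      rw [hLm0, Matrix.mulVec_zero]
      simp [l1norm]
  exact ⟨E1.trans E2.symm, E1⟩
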